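/- Let A be a full-rank d×d real matrix with positive smallest singular value σ_d(A), let ε ∈ (0,1), and let σ̄ satisfy σ_d(A)/2 ≤ σ̄ ≤ σ_d(A). Let Â be obtained by rounding each entry of (d/(σ̄ε))·A to the nearest integer. Then: (i) the condition number satisfies κ(Â) ≤ κ(A)(1 + 4ε); (ii) for all nonzero x ∈ ℝ^d, ‖f_A(x) − f_Â(x)‖₂ ≤ 2ε; and (iii) every entry of Â has magnitude O(d·κ(A)/ε). -/

import Mathlib

/-- The normalized linear transform `f_A(x) = Ax / ‖Ax‖₂`. -/
noncomputable def forster {d : ℕ} (A : Matrix (Fin d) (Fin d) ℝ)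
    (x : EuclideanSpace ℝ (Fin d)) : EuclideanSpace ℝ (Fin d) :=
  ‖Matrix.toEuclideanLin A x‖⁻¹ • Matrix.toEuclideanLin A x

/-- The largest singular value of `A`, i.e. its `ℓ₂` operator norm. -/
noncomputable def sigmaMax {d : ℕ} (A : Matrix (Fin d) (Fin d) ℝ) : ℝ :=
  ‖Matrix.toEuclideanCLM (𝕜 := ℝ) (n := Fin d) A‖

/-- The smallest singular value of an invertible matrix `A`, namely `1 / ‖A⁻¹‖_op`. -/
noncomputable def sigmaMin {d : ℕ} (A : Matrix (Fin d) (Fin d) ℝ) : ℝ :=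
  (sigmaMax A⁻¹)⁻¹

/-- The condition number `κ(A) = σ_max(A) / σ_min(A)`. -/
noncomputable def condNum {d : ℕ} (A : Matrix (Fin d) (Fin d) ℝ) : ℝ :=
  sigmaMax A * sigmaMax A⁻¹

namespace MatrixRounding

open Matrix

variable {d : ℕ}

lemma lin_eq_clm (A : Matrix (Fin d) (Fin d) ℝ) (x : EuclideanSpace ℝ (Fin d)) :
    Matrix.toEuclideanLin A x = Matrix.toEuclideanCLM (𝕜 := ℝ) A x := rfl

lemma coord_eq (A : Matrix (Fin d) (Fin d) ℝ) (x : EuclideanSpace ℝ (Fin d)) (i : Fin d) :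
    Matrix.toEuclideanLin A x i = ∑ j, A i j * x j := rfl

lemma coord_le_norm (y : EuclideanSpace ℝ (Fin d)) (i : Fin d) : |y i| ≤ ‖y‖ := by
  rw [EuclideanSpace.norm_eq, ← Real.sqrt_sq_eq_abs]
  apply Real.sqrt_le_sqrt
  simp only [Real.norm_eq_abs, sq_abs]
  exact Finset.single_le_sum (f := fun j => (y j)^2) (fun j _ => sq_nonneg _) (Finset.mem_univ i)

lemma entry_le_sigmaMax (A : Matrix (Fin d) (Fin d) ℝ) (i j : Fin d) :
    |A i j| ≤ sigmaMax A := by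
  have h1 : Matrix.toEuclideanLin A (EuclideanSpace.single j 1) i = A i j := by
    rw [coord_eq]
    simp [EuclideanSpace.single_apply]
  calc |A i j| ≤ ‖Matrix.toEuclideanLin A (EuclideanSpace.single j 1)‖ := h1 ▸ coord_le_norm _ i
    _ ≤ sigmaMax A * ‖EuclideanSpace.single j (1:ℝ)‖ := by
        rw [lin_eq_clm]; exact ContinuousLinearMap.le_opNorm _ _
    _ = sigmaMax A := by rw [EuclideanSpace.norm_single, norm_one, mul_one]

lemma lin_apply_le_of_entries (M : Matrix (Fin d) (Fin d) ℝ) {c : ℝ} (hc : 0 ≤ c)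
    (h : ∀ i j, |M i j| ≤ c) (x : EuclideanSpace ℝ (Fin d)) :
    ‖Matrix.toEuclideanLin M x‖ ≤ d * c * ‖x‖ := by
  have hx2 : ∑ j, (x j)^2 = ‖x‖^2 := by
    rw [EuclideanSpace.norm_eq, Real.sq_sqrt (by positivity)]
    simp [sq_abs]
  have key : ∀ i : Fin d, (Matrix.toEuclideanLin M x i)^2 ≤ (d * c^2) * ‖x‖^2 := by
    intro i
    rw [coord_eq]
    calc (∑ j, M i j * x j)^2 ≤ (∑ j, (M i j)^2) * (∑ j, (x j)^2) :=
          Finset.sum_mul_sq_le_sq_mul_sq _ _ _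
      _ ≤ (∑ _j : Fin d, c^2) * (∑ j, (x j)^2) := by
          apply mul_le_mul_of_nonneg_right _ (Finset.sum_nonneg fun j _ => sq_nonneg _)
          apply Finset.sum_le_sum
          intro j _
          rw [← sq_abs]
          exact pow_le_pow_left₀ (abs_nonneg _) (h i j) 2
      _ = (d * c^2) * ‖x‖^2 := by rw [hx2]; simp [mul_comm]
  rw [EuclideanSpace.norm_eq]
  have hsum : ∑ i, ‖Matrix.toEuclideanLin M x i‖^2 ≤ d * ((d * c^2) * ‖x‖^2) := by
    calc ∑ i, ‖Matrix.toEuclideanLin M x i‖^2 ≤ ∑ _i : Fin d, (d * c^2) * ‖x‖^2 := by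
          apply Finset.sum_le_sum; intro i _
          simpa [Real.norm_eq_abs, sq_abs] using key i
      _ = d * ((d * c^2) * ‖x‖^2) := by simp [mul_comm]
  calc Real.sqrt (∑ i, ‖Matrix.toEuclideanLin M x i‖^2) ≤ Real.sqrt ((d * c * ‖x‖)^2) := by
        apply Real.sqrt_le_sqrt; nlinarith [hsum]
    _ = d * c * ‖x‖ := Real.sqrt_sq (by positivity)

lemma sigmaMin_mul_le (A : Matrix (Fin d) (Fin d) ℝ) (hA : IsUnit A.det)
    (x : EuclideanSpace ℝ (Fin d)) :
    sigmaMin A * ‖x‖ ≤ ‖Matrix.toEuclideanLin A x‖ := by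
  have hinv : Matrix.toEuclideanCLM (𝕜 := ℝ) A⁻¹ (Matrix.toEuclideanCLM (𝕜 := ℝ) A x) = x := by
    rw [← ContinuousLinearMap.mul_apply, ← _root_.map_mul, Matrix.nonsing_inv_mul A hA,
      _root_.map_one, ContinuousLinearMap.one_apply]
  have h1 : ‖x‖ ≤ sigmaMax A⁻¹ * ‖Matrix.toEuclideanLin A x‖ := by
    conv_lhs => rw [← hinv]
    rw [lin_eq_clm]
    exact ContinuousLinearMap.le_opNorm _ _
  rcases eq_or_lt_of_le (norm_nonneg (Matrix.toEuclideanCLM (𝕜 := ℝ) A⁻¹)) with h0 | h0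
  · simp only [sigmaMin, sigmaMax, ← h0, _root_.inv_zero, zero_mul]
    exact norm_nonneg _
  · have h0' : 0 < sigmaMax A⁻¹ := h0
    rw [sigmaMin, inv_mul_le_iff₀ h0']
    exact h1

lemma sigmaMax_inv_le (A : Matrix (Fin d) (Fin d) ℝ) (hA : IsUnit A.det) {c : ℝ} (hc : 0 < c)
    (h : ∀ x, c * ‖x‖ ≤ ‖Matrix.toEuclideanLin A x‖) : sigmaMax A⁻¹ ≤ c⁻¹ := by
  apply ContinuousLinearMap.opNorm_le_bound _ (by positivity)
  intro y
  have hy : Matrix.toEuclideanCLM (𝕜 := ℝ) A (Matrix.toEuclideanCLM (𝕜 := ℝ) A⁻¹ y) = y := by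
    rw [← ContinuousLinearMap.mul_apply, ← _root_.map_mul, Matrix.mul_nonsing_inv A hA,
      _root_.map_one, ContinuousLinearMap.one_apply]
  have hk := h (Matrix.toEuclideanCLM (𝕜 := ℝ) A⁻¹ y)
  rw [lin_eq_clm, hy] at hk
  rw [inv_mul_eq_div, le_div_iff₀ hc, mul_comm]
  exact hk

lemma isUnit_of_lower (M : Matrix (Fin d) (Fin d) ℝ) {c : ℝ} (hc : 0 < c)
    (h : ∀ x, c * ‖x‖ ≤ ‖Matrix.toEuclideanLin M x‖) : IsUnit M.det := by
  rw [isUnit_iff_ne_zero]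
  intro hdet
  obtain ⟨v, hv0, hv⟩ := (Matrix.exists_mulVec_eq_zero_iff).2 hdet
  set x : EuclideanSpace ℝ (Fin d) := (WithLp.equiv 2 _).symm v with hxdef
  have hx : Matrix.toEuclideanLin M x = 0 := by
    rw [Matrix.toEuclideanLin_apply]
    simp [hxdef, hv]
  have hxn : 0 < ‖x‖ := by
    rw [norm_pos_iff]
    intro h0
    apply hv0
    have := congrArg (WithLp.equiv 2 (Fin d → ℝ)) h0
    simpa [hxdef] using this
  have := h x
  rw [hx, norm_zero] at this
  nlinarith

lemma norm_normalize_sub (u v : EuclideanSpace ℝ (Fin d)) (hu : u ≠ 0) (hv : v ≠ 0) :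
    ‖‖u‖⁻¹ • u - ‖v‖⁻¹ • v‖ ≤ 2 * ‖u - v‖ / ‖u‖ := by
  have hun : 0 < ‖u‖ := norm_pos_iff.2 hu
  have hvn : 0 < ‖v‖ := norm_pos_iff.2 hv
  have key : ‖u‖⁻¹ • u - ‖v‖⁻¹ • v = ‖u‖⁻¹ • (u - v) + (‖u‖⁻¹ - ‖v‖⁻¹) • v := by
    rw [smul_sub, sub_smul]; abel
  rw [key]
  refine (norm_add_le _ _).trans ?_
  rw [norm_smul, norm_smul]
  have h1 : ‖(‖u‖⁻¹ : ℝ)‖ * ‖u - v‖ = ‖u - v‖ / ‖u‖ := by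
    rw [Real.norm_eq_abs, abs_of_pos (by positivity)]; ring
  have h2 : ‖(‖u‖⁻¹ - ‖v‖⁻¹ : ℝ)‖ * ‖v‖ ≤ ‖u - v‖ / ‖u‖ := by
    rw [Real.norm_eq_abs]
    have he : ‖u‖⁻¹ - ‖v‖⁻¹ = (‖v‖ - ‖u‖) / (‖u‖ * ‖v‖) := by field_simp
    rw [he, abs_div, abs_of_pos (mul_pos hun hvn)]
    have hb : |‖v‖ - ‖u‖| ≤ ‖u - v‖ :=
      (abs_norm_sub_norm_le v u).trans (le_of_eq (norm_sub_rev v u))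
    rw [div_mul_eq_mul_div, div_le_div_iff₀ (by positivity) hun]
    calc |‖v‖ - ‖u‖| * ‖v‖ * ‖u‖ ≤ ‖u - v‖ * ‖v‖ * ‖u‖ := by
          apply mul_le_mul_of_nonneg_right (mul_le_mul_of_nonneg_right hb hvn.le) hun.le
      _ = ‖u - v‖ * (‖u‖ * ‖v‖) := by ring
  rw [h1, mul_div_assoc]
  linarith

lemma forster_smul (s : ℝ) (hs : 0 < s) (A : Matrix (Fin d) (Fin d) ℝ)
    (x : EuclideanSpace ℝ (Fin d)) : forster (s • A) x = forster A x := by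
  unfold forster
  rw [_root_.map_smul, LinearMap.smul_apply, norm_smul, Real.norm_eq_abs, abs_of_pos hs]
  rcases eq_or_ne (Matrix.toEuclideanLin A x) 0 with h | h
  · simp [h]
  · have hn : 0 < ‖Matrix.toEuclideanLin A x‖ := norm_pos_iff.2 h
    rw [smul_smul]
    congr 1
    field_simp

end MatrixRounding

open MatrixRounding Matrix

set_option maxHeartbeats 2000000 in
theorem matrix_rounding :
    ∃ C : ℝ, 0 < C ∧
      ∀ (d : ℕ) (A : Matrix (Fin d) (Fin d) ℝ), IsUnit A.det →
        ∀ ε σbar : ℝ, 0 < ε → ε < 1 → sigmaMin A / 2 ≤ σbar → σbar ≤ sigmaMin A →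
          ∀ Ahat : Matrix (Fin d) (Fin d) ℝ,
            (Ahat = Matrix.of fun i j => ((round ((d / (σbar * ε)) * A i j) : ℤ) : ℝ)) →
            condNum Ahat ≤ condNum A * (1 + 4 * ε) ∧
            (∀ x : EuclideanSpace ℝ (Fin d), x ≠ 0 →
              ‖forster A x - forster Ahat x‖ ≤ 2 * ε) ∧
            (∀ i j, |Ahat i j| ≤ C * d * condNum A / ε) := by
  refine ⟨3, by norm_num, ?_⟩
  intro d A hA ε σbar hε0 hε1 hσbar1 hσbar2 Ahat hAhat
  rcases Nat.eq_zero_or_pos d with hd | hd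
  · subst hd
    have hzero : ∀ B : Matrix (Fin 0) (Fin 0) ℝ,
        Matrix.toEuclideanCLM (𝕜 := ℝ) B = 0 := fun B => Subsingleton.elim _ _
    refine ⟨?_, ?_, ?_⟩
    · simp only [condNum, sigmaMax, hzero, norm_zero, zero_mul]
      positivity
    · intro x hx; exact absurd (Subsingleton.elim x 0) hx
    · exact fun i => i.elim0
  -- main case : d ≥ 1
  haveI : Nonempty (Fin d) := ⟨⟨0, hd⟩⟩
  have hd1 : (1:ℝ) ≤ d := by exact_mod_cast hd
  have hd0 : (0:ℝ) < d := by linarith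
  set N := sigmaMax A⁻¹ with hNdef
  set σmax := sigmaMax A with hσmaxdef
  set σ := sigmaMin A with hσdef
  have hσN : σ = N⁻¹ := rfl
  have hκdef : condNum A = σmax * N := rfl
  clear_value N σmax σ
  have hone : (1 : EuclideanSpace ℝ (Fin d) →L[ℝ] EuclideanSpace ℝ (Fin d)) =
      Matrix.toEuclideanCLM (𝕜 := ℝ) A * Matrix.toEuclideanCLM (𝕜 := ℝ) A⁻¹ := by
    rw [← _root_.map_mul, Matrix.mul_nonsing_inv A hA, _root_.map_one]
  haveI : Nontrivial (EuclideanSpace ℝ (Fin d)) := by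
    refine ⟨⟨EuclideanSpace.single ⟨0, hd⟩ 1, 0, fun h => ?_⟩⟩
    have := congrArg norm h
    simp [EuclideanSpace.norm_single] at this
  have hκ1 : 1 ≤ condNum A := by
    rw [hκdef, hσmaxdef, hNdef]
    calc (1:ℝ) = ‖(1 : EuclideanSpace ℝ (Fin d) →L[ℝ] EuclideanSpace ℝ (Fin d))‖ :=
          (norm_one).symm
      _ ≤ sigmaMax A * sigmaMax A⁻¹ := by rw [hone]; exact norm_mul_le _ _
  have hσmax0 : (0:ℝ) ≤ σmax := by rw [hσmaxdef]; exact norm_nonneg _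
  have hNnn : (0:ℝ) ≤ N := by rw [hNdef]; exact norm_nonneg _
  have hN0 : 0 < N := by
    rcases hNnn.eq_or_lt with h | h
    · exfalso; rw [hκdef, ← h, mul_zero] at hκ1; linarith
    · exact h
  have hσ0 : 0 < σ := by rw [hσN]; positivity
  have hκσ : condNum A * σ = σmax := by
    rw [hκdef, hσN]; field_simp
  have hσσmax : σ ≤ σmax := by
    have h1 : 1 ≤ σmax * N := by rw [← hκdef]; exact hκ1
    rw [hσN, inv_le_iff_one_le_mul₀ hN0]
    nlinarith
  have hσbar0 : 0 < σbar := by linarith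
  set s : ℝ := (d : ℝ) / (σbar * ε) with hsdef
  have hs0 : 0 < s := by rw [hsdef]; positivity
  have he : ε * (s * σ) = (d:ℝ) * σ / σbar := by
    rw [hsdef]; field_simp
  clear_value s
  have hεsσ : (d:ℝ) ≤ ε * (s * σ) := by
    rw [he, le_div_iff₀ hσbar0]
    nlinarith
  have hεsσu : ε * (s * σ) ≤ 2 * d := by
    rw [he, div_le_iff₀ hσbar0]
    nlinarith
  -- rounding error matrix
  set R : Matrix (Fin d) (Fin d) ℝ :=
    Matrix.of (fun i j => ((round (s * A i j) : ℤ) : ℝ) - s * A i j) with hRdef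
  have hAhatR : Ahat = s • A + R := by
    rw [hAhat]; ext i j
    simp [hRdef, Matrix.smul_apply]
  have hRb : ∀ i j, |R i j| ≤ 1/2 := by
    intro i j
    simpa [hRdef, abs_sub_comm] using abs_sub_round (s * A i j)
  have hRx : ∀ x : EuclideanSpace ℝ (Fin d), ‖Matrix.toEuclideanLin R x‖ ≤ (d/2) * ‖x‖ := by
    intro x
    have := lin_apply_le_of_entries R (by norm_num : (0:ℝ) ≤ 1/2) hRb x
    calc ‖Matrix.toEuclideanLin R x‖ ≤ (d : ℝ) * (1/2) * ‖x‖ := this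
      _ = (d/2) * ‖x‖ := by ring_nf
  clear_value R
  have hdec : ∀ x : EuclideanSpace ℝ (Fin d),
      Matrix.toEuclideanLin Ahat x = s • Matrix.toEuclideanLin A x + Matrix.toEuclideanLin R x := by
    intro x
    rw [hAhatR, map_add, _root_.map_smul]
    rfl
  have hAxlow : ∀ x : EuclideanSpace ℝ (Fin d), σ * ‖x‖ ≤ ‖Matrix.toEuclideanLin A x‖ := by
    intro x; rw [hσdef]; exact sigmaMin_mul_le A hA x
  have hAxup : ∀ x : EuclideanSpace ℝ (Fin d), ‖Matrix.toEuclideanLin A x‖ ≤ σmax * ‖x‖ := by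
    intro x; rw [hσmaxdef, lin_eq_clm]; exact ContinuousLinearMap.le_opNorm _ _
  have hsmulnorm : ∀ x : EuclideanSpace ℝ (Fin d),
      ‖s • Matrix.toEuclideanLin A x‖ = s * ‖Matrix.toEuclideanLin A x‖ := by
    intro x; rw [norm_smul, Real.norm_eq_abs, abs_of_pos hs0]
  have hlow : ∀ x : EuclideanSpace ℝ (Fin d),
      (s * σ - d/2) * ‖x‖ ≤ ‖Matrix.toEuclideanLin Ahat x‖ := by
    intro x
    rw [hdec x]
    have h1 : ‖s • Matrix.toEuclideanLin A x‖ ≤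
        ‖s • Matrix.toEuclideanLin A x + Matrix.toEuclideanLin R x‖ +
          ‖Matrix.toEuclideanLin R x‖ := by
      calc ‖s • Matrix.toEuclideanLin A x‖
          = ‖(s • Matrix.toEuclideanLin A x + Matrix.toEuclideanLin R x) -
              Matrix.toEuclideanLin R x‖ := by rw [add_sub_cancel_right]
        _ ≤ _ := norm_sub_le _ _
    rw [hsmulnorm x] at h1
    have h2 := hRx x
    linarith [mul_le_mul_of_nonneg_left (hAxlow x) hs0.le]
  have hc0 : 0 < s * σ - d/2 := by
    linarith [mul_le_mul_of_nonneg_right hε1.le (mul_pos hs0 hσ0).le,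
      mul_pos hs0 hσ0]
  have hdet2 : IsUnit Ahat.det := isUnit_of_lower Ahat hc0 hlow
  have hNhat : sigmaMax Ahat⁻¹ ≤ (s * σ - d/2)⁻¹ := sigmaMax_inv_le Ahat hdet2 hc0 hlow
  have hMhat : sigmaMax Ahat ≤ s * σmax + d/2 := by
    apply ContinuousLinearMap.opNorm_le_bound _ (by positivity)
    intro x
    rw [← lin_eq_clm, hdec x]
    calc ‖s • Matrix.toEuclideanLin A x + Matrix.toEuclideanLin R x‖
        ≤ ‖s • Matrix.toEuclideanLin A x‖ + ‖Matrix.toEuclideanLin R x‖ := norm_add_le _ _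
      _ ≤ s * (σmax * ‖x‖) + (d/2) * ‖x‖ := by
          rw [hsmulnorm x]
          have h5 := hRx x
          linarith [mul_le_mul_of_nonneg_left (hAxup x) hs0.le]
      _ = (s * σmax + d/2) * ‖x‖ := by ring
  refine ⟨?_, ?_, ?_⟩
  · -- condition number bound
    have hhat0 : (0:ℝ) ≤ s * σmax + d/2 := by positivity
    calc condNum Ahat = sigmaMax Ahat * sigmaMax Ahat⁻¹ := rfl
      _ ≤ (s * σmax + d/2) * (s * σ - d/2)⁻¹ :=
          mul_le_mul hMhat hNhat (norm_nonneg _) hhat0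
      _ ≤ condNum A * (1 + 4 * ε) := by
          rw [← div_eq_mul_inv, div_le_iff₀ hc0]
          have hsub : σmax = condNum A * σ := hκσ.symm
          rw [hsub]
          nlinarith [mul_le_mul_of_nonneg_left hεsσ (by nlinarith : (0:ℝ) ≤ 4 * condNum A),
            mul_pos hs0 hσ0, hκ1, hd1, hε1.le, hε0.le,
            mul_nonneg (mul_nonneg (sub_nonneg.2 hκ1) hd0.le) (sub_nonneg.2 hε1.le)]
  · -- closeness of forster transforms
    intro x hx
    have hxn : 0 < ‖x‖ := norm_pos_iff.2 hx
    set u := Matrix.toEuclideanLin (s • A) x with hudef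
    set v := Matrix.toEuclideanLin Ahat x with hvdef
    have hu_eq : u = s • Matrix.toEuclideanLin A x := by
      rw [hudef, _root_.map_smul]; rfl
    have hu_norm : s * σ * ‖x‖ ≤ ‖u‖ := by
      rw [hu_eq, hsmulnorm x]
      linarith [mul_le_mul_of_nonneg_left (hAxlow x) hs0.le]
    have hu0 : u ≠ 0 := by
      rw [← norm_pos_iff]
      linarith [hu_norm, mul_pos (mul_pos hs0 hσ0) hxn]
    have hv_norm : (s * σ - d/2) * ‖x‖ ≤ ‖v‖ := hlow x
    have hv0 : v ≠ 0 := by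
      rw [← norm_pos_iff]
      linarith [hv_norm, mul_pos hc0 hxn]
    have huv : ‖u - v‖ ≤ (d/2) * ‖x‖ := by
      have huvq : u - v = -(Matrix.toEuclideanLin R x) := by
        rw [hu_eq, hvdef, hdec x]; abel
      rw [huvq, norm_neg]
      exact hRx x
    have hfs : forster A x = forster (s • A) x := (forster_smul s hs0 A x).symm
    rw [hfs]
    have hmain : ‖forster (s • A) x - forster Ahat x‖ ≤ 2 * ‖u - v‖ / ‖u‖ :=
      norm_normalize_sub u v hu0 hv0
    refine hmain.trans ?_
    have hu_pos : 0 < ‖u‖ := norm_pos_iff.2 hu0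
    rw [div_le_iff₀ hu_pos]
    have h2 : 2 * ‖u - v‖ ≤ d * ‖x‖ := by linarith [huv]
    have h3 : ε * (s * σ * ‖x‖) ≤ ε * ‖u‖ :=
      mul_le_mul_of_nonneg_left hu_norm hε0.le
    linarith [h2, h3, mul_le_mul_of_nonneg_right hεsσ hxn.le,
      mul_nonneg hε0.le (norm_nonneg u)]
  · -- entry bound
    intro i j
    have h1 : |Ahat i j| ≤ s * |A i j| + 1/2 := by
      have hq : Ahat i j = s * A i j + R i j := by rw [hAhatR]; simp [Matrix.smul_apply]
      rw [hq]
      calc |s * A i j + R i j| ≤ |s * A i j| + |R i j| := abs_add_le _ _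
        _ ≤ s * |A i j| + 1/2 := by
            rw [abs_mul, abs_of_pos hs0]
            exact add_le_add_right (hRb i j) _
    have h2 : |A i j| ≤ σmax := by rw [hσmaxdef]; exact entry_le_sigmaMax A i j
    rw [div_eq_mul_inv, ← div_eq_mul_inv, le_div_iff₀ hε0]
    have h3 : s * |A i j| ≤ s * σmax := mul_le_mul_of_nonneg_left h2 hs0.le
    have hsub : σmax = condNum A * σ := hκσ.symm
    have h4 : ε * (s * σ) * condNum A ≤ 2 * d * condNum A :=
      mul_le_mul_of_nonneg_right hεsσu (by linarith)
    have h5 : s * σmax * ε ≤ 2 * ↑d * condNum A := by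
      rw [hsub]; nlinarith [h4]
    have h6 : (1:ℝ) ≤ ↑d * condNum A := by nlinarith [hd1, hκ1]
    nlinarith [mul_le_mul_of_nonneg_right h1 hε0.le,
      mul_le_mul_of_nonneg_right h3 hε0.le, h5, h6, hε1.le, hε0.le]
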